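/- arXiv:2601.06643 — 5 statements merged into one kernel-verified Lean document; each statement's English description precedes it below -/
import Mathlib

section
/- For all t > 0, the Laplace-type integral t·∫₀^∞ Θ₁(1/z)·e^{-tz} dz equals √t / sinh(√t), where Θ₁(t) = 1 + 2·∑_{k=1}^∞ (-1)^k · exp(-(πk)²/t). -/
open Real

noncomputable def Theta1 (t : ℝ) : ℝ :=
  1 + 2 * ∑' k : ℕ, (-1 : ℝ) ^ (k + 1) * Real.exp (-(π * (k + 1)) ^ 2 / t)

open MeasureTheory Set Complex

lemma exp_int_pi (n : ℤ) : Complex.exp ((n:ℂ) * (π * I)) = (-1)^n := by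
  rw [Complex.exp_int_mul, Complex.exp_pi_mul_I]

lemma neg_one_zpow_mul_self (n : ℤ) : ((-1:ℂ)^n) * ((-1:ℂ)^n) = 1 := by
  rw [← zpow_add₀ (by norm_num : (-1:ℂ) ≠ 0), show n + n = 2 * n by ring, zpow_mul]
  norm_num

lemma neg_one_zpow_inv (n : ℤ) : ((-1:ℂ)^n)⁻¹ = (-1)^n :=
  inv_eq_of_mul_eq_one_right (neg_one_zpow_mul_self n)

lemma cosh_coeff (a : ℝ) (ha : 0 < a) (n : ℤ) :
    (∫ x in (-π:ℝ)..π, Complex.exp (-(I * n * x)) * Complex.cosh (a * x)) =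
      (-1)^n * (2 * a * Complex.sinh (a * π) / (a^2 + n^2)) := by
  have hc1 : ((a:ℂ) - n * I) ≠ 0 := fun h => by
    have := congrArg Complex.re h; simp at this; exact ha.ne' this
  have hc2 : (-(a:ℂ) - n * I) ≠ 0 := fun h => by
    have := congrArg Complex.re h; simp at this
    exact ha.ne' (by linarith)
  have hden : ((a:ℂ)^2 + (n:ℂ)^2) ≠ 0 := by
    have : ((a:ℂ)^2 + (n:ℂ)^2) = ((a^2 + (n:ℝ)^2 : ℝ) : ℂ) := by push_cast; ring
    rw [this, Complex.ofReal_ne_zero]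
    positivity
  have key : ∀ x : ℝ, Complex.exp (-(I * n * x)) * Complex.cosh (a * x) =
      (Complex.exp (((a:ℂ) - n * I) * x) + Complex.exp ((-(a:ℂ) - n * I) * x)) / 2 := by
    intro x
    rw [Complex.cosh, ← mul_div_assoc, mul_add, ← Complex.exp_add, ← Complex.exp_add]
    rw [show -(I * (n:ℂ) * x) + a * x = ((a:ℂ) - n * I) * x by ring,
        show -(I * (n:ℂ) * x) + -(a * x) = (-(a:ℂ) - n * I) * x by ring]
  rw [intervalIntegral.integral_congr (fun x _ => key x)]
  rw [intervalIntegral.integral_div]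
  rw [intervalIntegral.integral_add
    (Continuous.intervalIntegrable (by fun_prop) _ _)
    (Continuous.intervalIntegrable (by fun_prop) _ _)]
  rw [integral_exp_mul_complex hc1, integral_exp_mul_complex hc2]
  have E1 : Complex.exp (((a:ℂ) - n * I) * π) = (-1)^n * Complex.exp (a * π) := by
    rw [sub_mul, Complex.exp_sub, show (n:ℂ) * I * π = n * (π * I) by ring, exp_int_pi,
      div_eq_mul_inv, neg_one_zpow_inv, mul_comm]
  have E2 : Complex.exp ((-(a:ℂ) - n * I) * π) = (-1)^n * (Complex.exp (a * π))⁻¹ := by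
    rw [sub_mul, Complex.exp_sub, show (n:ℂ) * I * π = n * (π * I) by ring, exp_int_pi,
      div_eq_mul_inv, neg_one_zpow_inv, mul_comm, neg_mul, Complex.exp_neg]
  have hpi : ∀ c : ℂ, c * ((-π : ℝ):ℂ) = -(c * (π:ℝ)) := by intro c; push_cast; ring
  rw [hpi, hpi, Complex.exp_neg, Complex.exp_neg, E1, E2, Complex.sinh, Complex.exp_neg]
  have hE : Complex.exp ((a:ℂ) * π) ≠ 0 := Complex.exp_ne_zero _
  rcases Int.even_or_odd n with he | ho
  · rw [he.neg_one_zpow]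
    field_simp
    ring_nf
    simp [Complex.I_sq]
  · rw [ho.neg_one_zpow]
    field_simp
    ring_nf
    simp [Complex.I_sq]
    ring

lemma summable_aux {a : ℝ} (ha : 0 < a) : Summable (fun n : ℤ => 1 / (a^2 + (n:ℝ)^2)) := by
  have hnat : Summable (fun n : ℕ => 1 / (a^2 + (n:ℝ)^2)) := by
    rw [← summable_nat_add_iff 1]
    have hbase : Summable (fun n : ℕ => 1 / ((n:ℝ)+1)^2) := by
      have := (summable_nat_add_iff (f := fun n : ℕ => 1/(n:ℝ)^2) 1).2
        (summable_one_div_nat_pow.2 one_lt_two)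
      refine this.congr fun n => by push_cast; ring_nf
    refine Summable.of_nonneg_of_le (fun n => by positivity) (fun n => ?_) hbase
    apply one_div_le_one_div_of_le (by positivity)
    push_cast
    nlinarith [sq_nonneg a]
  refine Summable.of_nat_of_neg (hnat.congr fun n => by norm_num) (hnat.congr fun n => by push_cast; norm_num)

lemma hasSum_int_alt {a : ℝ} (ha : 0 < a) :
    HasSum (fun n : ℤ => (-1:ℝ)^n / (a^2 + (n:ℝ)^2)) (π / (a * Real.sinh (a * π))) := by
  haveI : Fact (0 < 2 * π) := ⟨by positivity⟩
  set g : ℝ → ℂ := fun x => Complex.cosh (a * x) with hg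
  have hper : g (-π) = g (-π + 2 * π) := by
    simp only [hg]
    rw [show (-π + 2*π : ℝ) = π by ring]
    push_cast
    rw [mul_neg, Complex.cosh_neg]
  set F : C(AddCircle (2 * π), ℂ) :=
    ⟨AddCircle.liftIco (2*π) (-π) g, AddCircle.liftIco_continuous hper
      ((Continuous.continuousOn (by fun_prop)))⟩ with hF
  set r : ℤ → ℝ := fun n => a * Real.sinh (a * π) / (π * (a^2 + (n:ℝ)^2)) with hr
  have hcoeff : ∀ n : ℤ, fourierCoeff (F : AddCircle (2*π) → ℂ) n = (-1:ℂ)^n * (r n : ℂ) := by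
    intro n
    have h1 : fourierCoeff (F : AddCircle (2*π) → ℂ) n
        = fourierCoeffOn (lt_add_of_pos_right (-π) (by positivity : (0:ℝ) < 2*π)) g n := by
      exact fourierCoeff_liftIco_eq g n
    rw [h1, fourierCoeffOn_eq_integral]
    have hI : ∀ x : ℝ, x ∈ uIcc (-π) (-π + 2*π) →
        (fourier (-n) (x : AddCircle (-π + 2*π - -π)) : ℂ) • g x
          = Complex.exp (-(I * n * x)) * Complex.cosh (a * x) := by
      intro x _
      rw [fourier_coe_apply, smul_eq_mul]
      congr 1
      rw [show (-π + 2*π - -π : ℝ) = 2*π by ring]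
      push_cast
      rw [show 2*(π:ℂ)*I*(-n)*x/(2*π) = -(I * n * x) * ((2*π)/(2*π)) by ring,
        div_self (by simp [Real.pi_ne_zero] : (2*(π:ℂ)) ≠ 0), mul_one]
    rw [intervalIntegral.integral_congr hI]
    rw [show (-π + 2*π : ℝ) = π by ring]
    rw [cosh_coeff a ha n]
    rw [show (π - -π : ℝ) = 2*π by ring]
    have hsinh : Complex.sinh ((a:ℂ) * (π:ℝ)) = (Real.sinh (a * π) : ℂ) := by
      push_cast
      ring
    rw [hsinh]
    simp only [real_smul, hr]
    push_cast
    have hpi : (π:ℂ) ≠ 0 := by exact_mod_cast Real.pi_ne_zero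
    have hden : ((a:ℂ)^2 + (n:ℂ)^2) ≠ 0 := by
      have : ((a:ℂ)^2 + (n:ℂ)^2) = ((a^2 + (n:ℝ)^2 : ℝ) : ℂ) := by push_cast; ring
      rw [this, Complex.ofReal_ne_zero]; positivity
    field_simp
  have hsinh0 : Real.sinh (a * π) ≠ 0 := by positivity
  have hrpos : ∀ n : ℤ, 0 ≤ r n := fun n => by rw [hr]; positivity
  have hsum : Summable (fun n : ℤ => fourierCoeff (F : AddCircle (2*π) → ℂ) n) := by
    apply Summable.of_norm
    have heq : ∀ n : ℤ, ‖fourierCoeff (F : AddCircle (2*π) → ℂ) n‖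
        = (a * Real.sinh (a*π) / π) * (1/(a^2+(n:ℝ)^2)) := by
      intro n
      rw [hcoeff n, norm_mul, norm_zpow, norm_neg, norm_one, one_zpow, one_mul,
        Complex.norm_real, Real.norm_eq_abs, _root_.abs_of_nonneg (hrpos n), hr]
      field_simp
    exact Summable.congr ((summable_aux ha).mul_left (a * Real.sinh (a*π) / π))
      (fun n => (heq n).symm)
  have h0 := has_pointwise_sum_fourier_series_of_summable hsum (0 : AddCircle (2*π))
  have hF0 : F (0 : AddCircle (2*π)) = 1 := by
    have h0m : (0:ℝ) ∈ Ico (-π) (-π + 2*π) := ⟨by linarith [pi_pos], by linarith [pi_pos]⟩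
    have hz : ((0:ℝ) : AddCircle (2*π)) = 0 := by norm_cast
    have : F (((0:ℝ) : AddCircle (2*π))) = g 0 := by
      show AddCircle.liftIco (2*π) (-π) g _ = g 0
      exact AddCircle.liftIco_coe_apply h0m
    rw [hz] at this
    rw [this, hg]
    simp
  simp_rw [hcoeff, fourier_eval_zero, smul_eq_mul, mul_one, hF0] at h0
  have hd := h0.mul_left ((π / (a * Real.sinh (a*π)) : ℝ) : ℂ)
  rw [mul_one] at hd
  have hterm : (fun n : ℤ => ((π / (a * Real.sinh (a*π)) : ℝ):ℂ) * ((-1)^n * (r n:ℂ)))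
      = fun n : ℤ => (((-1:ℝ)^n / (a^2+(n:ℝ)^2) : ℝ) : ℂ) := by
    funext n
    have hden : (a:ℝ)^2 + (n:ℝ)^2 ≠ 0 := by positivity
    rw [show ((-1:ℂ))^n = (((-1:ℝ)^n : ℝ) : ℂ) by push_cast; ring,
      ← Complex.ofReal_mul, ← Complex.ofReal_mul, Complex.ofReal_inj, hr]
    field_simp
  rw [hterm] at hd
  exact hasSum_ofReal.mp hd

lemma hasSum_nat_aux {a : ℝ} (ha : 0 < a) :
    HasSum (fun k : ℕ => (-1:ℝ)^(k+1) / (a^2 + ((k:ℝ)+1)^2))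
      (π / (2*a*Real.sinh (a*π)) - 1/(2*a^2)) := by
  have h2 := (hasSum_int_alt ha).nat_add_neg
  push_cast at h2
  have h3 : HasSum (fun n : ℕ => 2*(-1:ℝ)^n/(a^2+(n:ℝ)^2))
      (π / (a * Real.sinh (a*π)) + 1/a^2) := by
    have heq : (fun n : ℕ => (-1:ℝ)^(n:ℤ)/(a^2+(n:ℝ)^2) + (-1:ℝ)^(-(n:ℤ))/(a^2+(-(n:ℝ))^2))
        = fun n : ℕ => 2*(-1:ℝ)^n/(a^2+(n:ℝ)^2) := by
      funext n
      rw [zpow_neg, zpow_natCast, ← inv_pow]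
      norm_num
      ring
    rw [heq] at h2
    convert h2 using 2
    norm_num
  have h4 := (hasSum_nat_add_iff' (f := fun n : ℕ => 2*(-1:ℝ)^n/(a^2+(n:ℝ)^2)) 1).2 h3
  have h5 := h4.div_const 2
  simp only [Finset.range_one, Finset.sum_singleton] at h5
  have heq2 : (fun n : ℕ => (2*(-1:ℝ)^(n+1)/(a^2+((n+1:ℕ):ℝ)^2))/2)
      = fun k : ℕ => (-1:ℝ)^(k+1) / (a^2 + ((k:ℝ)+1)^2) := by
    funext n; push_cast; ring
  rw [heq2] at h5
  convert h5 using 1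
  · rfl
  have : (a:ℝ)^2 ≠ 0 := by positivity
  have hs : Real.sinh (a*π) ≠ 0 := by positivity
  field_simp
  ring

noncomputable def lapF (t : ℝ) : ℕ → ℝ → ℝ
  | 0, z => Real.exp (-(t*z))
  | (k+1), z => 2*(-1:ℝ)^(k+1)*Real.exp (-((π^2*((k:ℝ)+1)^2 + t)*z))




lemma summable_inv_sq_succ : Summable (fun n : ℕ => 1 / ((n:ℝ)+1)^2) := by
  have := (summable_nat_add_iff (f := fun n : ℕ => 1/(n:ℝ)^2) 1).2
    (summable_one_div_nat_pow.2 one_lt_two)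
  refine this.congr fun n => by push_cast; ring_nf

lemma integral_exp_neg_mul {c : ℝ} (hc : 0 < c) :
    ∫ z in Ioi (0:ℝ), Real.exp (-(c*z)) = 1/c := by
  have h := integral_comp_mul_left_Ioi (fun y => Real.exp (-y)) 0 hc
  rw [mul_zero] at h
  rw [h, integral_exp_neg_Ioi_zero, smul_eq_mul, mul_one, one_div]

theorem laplace_theta1 (t : ℝ) (ht : 0 < t) :
    t * ∫ z in Set.Ioi (0 : ℝ), Theta1 (1 / z) * Real.exp (-(t * z)) =
      Real.sqrt t / Real.sinh (Real.sqrt t) := by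
  set c : ℕ → ℝ := fun k => π^2*((k:ℝ)+1)^2 + t with hc
  have hcpos : ∀ k, 0 < c k := fun k => by rw [hc]; positivity
  have hcge : ∀ k : ℕ, π^2*((k:ℝ)+1)^2 ≤ c k := fun k => by
    have h : c k = π^2*((k:ℝ)+1)^2 + t := rfl
    rw [h]; linarith
  -- pointwise identity
  have hpt : ∀ z ∈ Ioi (0:ℝ), Theta1 (1/z) * Real.exp (-(t*z)) = ∑' k, lapF t k z := by
    intro z hz
    rw [mem_Ioi] at hz
    have hgeom : Summable (fun k : ℕ => lapF t (k+1) z) := by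
      apply Summable.of_norm
      have hb : ∀ k:ℕ, ‖lapF t (k+1) z‖ ≤ 2 * Real.exp (-(π^2*z))^(k+1) := by
        intro k
        have hnorm : ‖lapF t (k+1) z‖ = 2 * Real.exp (-((π^2*((k:ℝ)+1)^2 + t)*z)) := by
          simp only [lapF, Real.norm_eq_abs, abs_mul, _root_.abs_pow, abs_neg, abs_one,
            one_pow, mul_one, Real.abs_exp, Nat.abs_ofNat]
        rw [hnorm, ← Real.exp_nat_mul]
        refine mul_le_mul_of_nonneg_left (Real.exp_le_exp.2 ?_) (by norm_num)
        push_cast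
        have h1 : (0:ℝ) ≤ ((k:ℝ)+1)^2 - ((k:ℝ)+1) := by nlinarith [(Nat.cast_nonneg k : (0:ℝ) ≤ k)]
        nlinarith [mul_nonneg (mul_nonneg (sq_nonneg π) h1) hz.le, mul_pos ht hz]
      refine Summable.of_nonneg_of_le (fun k => norm_nonneg _) hb ?_
      have hr1 : Real.exp (-(π^2*z)) < 1 := by
        rw [Real.exp_lt_one_iff]
        have : 0 < π^2*z := by positivity
        linarith
      have := (summable_geometric_of_lt_one (Real.exp_nonneg _) hr1).mul_left
        (2 * Real.exp (-(π^2*z)))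
      refine this.congr fun k => by rw [pow_succ]; ring
    have hsumF : Summable (fun k => lapF t k z) := (summable_nat_add_iff 1).1 hgeom
    rw [Summable.tsum_eq_zero_add hsumF]
    have hsplit : ∀ k : ℕ, lapF t (k+1) z
        = (2*Real.exp (-(t*z))) * ((-1:ℝ)^(k+1) * Real.exp (-(π*((k:ℝ)+1))^2 / (1/z))) := by
      intro k
      simp only [lapF]
      rw [show (-(π*((k:ℝ)+1))^2 / (1/z)) = -((π*((k:ℝ)+1))^2 * z) by
          rw [div_eq_mul_inv, one_div, inv_inv]; ring,
        show -((π^2*((k:ℝ)+1)^2 + t)*z) = -(t*z) + -((π*((k:ℝ)+1))^2 * z) by ring,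
        Real.exp_add]
      ring
    rw [tsum_congr hsplit, tsum_mul_left]
    show Theta1 (1/z) * Real.exp (-(t*z)) = lapF t 0 z + _
    simp only [lapF, Theta1]
    push_cast
    ring
  -- integrability and values
  have hInt : ∀ k, IntegrableOn (lapF t k) (Ioi (0:ℝ)) := by
    intro k
    cases k with
    | zero =>
      have h := exp_neg_integrableOn_Ioi 0 ht
      show IntegrableOn (fun z => Real.exp (-(t*z))) (Ioi 0)
      simpa only [neg_mul] using h
    | succ k =>
      have h := (exp_neg_integrableOn_Ioi 0 (hcpos k)).const_mul (2*(-1:ℝ)^(k+1))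
      show IntegrableOn (fun z => 2*(-1:ℝ)^(k+1)*Real.exp (-((π^2*((k:ℝ)+1)^2 + t)*z))) (Ioi 0)
      simp only [hc, neg_mul] at h
      exact h
  have hval0 : ∫ z in Ioi (0:ℝ), lapF t 0 z = 1/t := by
    simp only [lapF]; exact integral_exp_neg_mul ht
  have hvalS : ∀ k, ∫ z in Ioi (0:ℝ), lapF t (k+1) z = 2*(-1:ℝ)^(k+1)/(c k) := by
    intro k
    simp only [lapF]
    rw [MeasureTheory.integral_const_mul, integral_exp_neg_mul (hcpos k)]
    rw [hc]; ring
  have hnormval : ∀ k, ∫ z in Ioi (0:ℝ), ‖lapF t k z‖ = ∫ z in Ioi (0:ℝ), |lapF t k z| :=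
    fun k => rfl
  have hnorm0 : ∫ z in Ioi (0:ℝ), ‖lapF t 0 z‖ = 1/t := by
    rw [← hval0]
    refine setIntegral_congr_fun measurableSet_Ioi (fun z _ => ?_)
    simp only [lapF, Real.norm_eq_abs, abs_of_pos (Real.exp_pos _)]
  have hnormS : ∀ k, ∫ z in Ioi (0:ℝ), ‖lapF t (k+1) z‖ = 2/(c k) := by
    intro k
    have : ∀ z : ℝ, ‖lapF t (k+1) z‖ = 2 * Real.exp (-((c k)*z)) := by
      intro z
      simp only [lapF, Real.norm_eq_abs, abs_mul, _root_.abs_pow, abs_neg, abs_one, one_pow,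
        mul_one, Real.abs_exp, Nat.abs_ofNat, hc]
    rw [setIntegral_congr_fun measurableSet_Ioi (fun z _ => this z),
      MeasureTheory.integral_const_mul, integral_exp_neg_mul (hcpos k)]
    ring
  -- summability of norm integrals
  have hNsum : Summable (fun k => ∫ z in Ioi (0:ℝ), ‖lapF t k z‖) := by
    apply (summable_nat_add_iff 1).1
    have hcomp : Summable (fun k : ℕ => 2/π^2 * (1/((k:ℝ)+1)^2)) :=
      summable_inv_sq_succ.mul_left _
    refine Summable.of_nonneg_of_le (fun k => ?_) (fun k => ?_) hcomp
    · rw [hnormS k]; positivity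
    · rw [hnormS k]
      rw [show 2/π^2 * (1/((k:ℝ)+1)^2) = 2/(π^2*((k:ℝ)+1)^2) by field_simp]
      gcongr
      exact hcge k
  -- swap integral and sum
  have hmeas : ∀ k, AEStronglyMeasurable (lapF t k) (volume.restrict (Ioi (0:ℝ))) := by
    intro k
    have : Continuous (lapF t k) := by
      cases k with
      | zero => exact (by fun_prop : Continuous fun z : ℝ => Real.exp (-(t*z)))
      | succ k => exact (by fun_prop :
          Continuous fun z : ℝ => 2*(-1:ℝ)^(k+1)*Real.exp (-((π^2*((k:ℝ)+1)^2 + t)*z)))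
    exact this.aestronglyMeasurable
  have hlint : ∑' k, ∫⁻ z, ‖lapF t k z‖₊ ∂(volume.restrict (Ioi (0:ℝ))) ≠ ⊤ := by
    have heach : ∀ k, ∫⁻ z, ‖lapF t k z‖₊ ∂(volume.restrict (Ioi (0:ℝ)))
        = ENNReal.ofReal (∫ z in Ioi (0:ℝ), ‖lapF t k z‖) :=
      fun k => (ofReal_integral_norm_eq_lintegral_enorm (hInt k)).symm
    rw [tsum_congr heach,
      ← ENNReal.ofReal_tsum_of_nonneg (fun k => integral_nonneg (fun z => norm_nonneg _)) hNsum]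
    exact ENNReal.ofReal_ne_top
  have hswap := MeasureTheory.integral_tsum hmeas hlint
  rw [setIntegral_congr_fun measurableSet_Ioi hpt, hswap]
  -- evaluate the sum
  set s := Real.sqrt t with hsdef
  have hs0 : 0 < s := Real.sqrt_pos.2 ht
  have hs2 : s^2 = t := Real.sq_sqrt ht.le
  have hsh : Real.sinh s ≠ 0 := by positivity
  have ha : (0:ℝ) < s / π := by positivity
  have haux := hasSum_nat_aux ha
  rw [div_mul_cancel₀ s Real.pi_ne_zero] at haux
  have hh : HasSum (fun k => ∫ z in Ioi (0:ℝ), lapF t (k+1) z)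
      (1/(s * Real.sinh s) - 1/t) := by
    have h := haux.mul_left (2/π^2)
    have heq : (fun k : ℕ => (2/π^2) * ((-1:ℝ)^(k+1)/((s/π)^2+((k:ℝ)+1)^2)))
        = fun k => ∫ z in Ioi (0:ℝ), lapF t (k+1) z := by
      funext k
      rw [hvalS k, hc, div_pow, hs2]
      have h1 : ((k:ℝ)+1)^2 > 0 := by positivity
      field_simp
      ring
    rw [heq] at h
    convert h using 1
    · rfl
    rw [div_pow, hs2]
    field_simp
  have hfull := (hasSum_nat_add_iff (f := fun k => ∫ z in Ioi (0:ℝ), lapF t k z) 1).1 hh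
  simp only [Finset.range_one, Finset.sum_singleton, hval0] at hfull
  rw [hfull.tsum_eq]
  field_simp
  linear_combination (-1:ℝ) * hs2
end

section
/- For complex s with Re(s) > 1, ∫₀^∞ t^{s-1}/sinh(t) dt = 2·Γ(s)·(1 - 2^{-s})·ζ(s). -/
set_option maxHeartbeats 1000000
open Real Complex

theorem mellin_inv_sinh (s : ℂ) (hs : 1 < s.re) :
    ∫ t in Set.Ioi (0 : ℝ), (t : ℂ) ^ (s - 1) / Complex.sinh (t : ℂ) =
      2 * Complex.Gamma s * (1 - (2 : ℂ) ^ (-s)) * riemannZeta s := by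
  have hs0 : 0 < s.re := by linarith
  have hsne : s ≠ 0 := fun h ↦ by simp [h] at hs0
  -- Step 1: Mellin transform of 1/sinh as a sum over odd integers
  have key : HasSum (fun n : ℕ ↦ Complex.Gamma s * 2 / ((2 * n + 1 : ℝ) : ℂ) ^ s)
      (mellin (fun t : ℝ ↦ 1 / Complex.sinh (t : ℂ)) s) := by
    apply hasSum_mellin (a := fun _ : ℕ ↦ (2 : ℂ)) (p := fun n : ℕ ↦ 2 * n + 1)
      (fun n ↦ Or.inr (by positivity)) hs0
    · intro t ht
      have ht : (0:ℝ) < t := ht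
      have hlt : rexp (-(2 * t)) < 1 := by
        rw [Real.exp_lt_one_iff]; linarith
      have hgeo : HasSum (fun n : ℕ ↦ rexp (-(2 * t)) ^ n) (1 / (1 - rexp (-(2 * t)))) := by
        simpa [one_div] using hasSum_geometric_of_lt_one (Real.exp_nonneg _) hlt
      have h2 : HasSum (fun n : ℕ ↦ 2 * rexp (-t) * rexp (-(2 * t)) ^ n)
          (2 * rexp (-t) * (1 / (1 - rexp (-(2 * t)))))  := hgeo.mul_left _
      have heq : ∀ n : ℕ, 2 * rexp (-t) * rexp (-(2 * t)) ^ n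
          = 2 * rexp (-(2 * n + 1) * t) := by
        intro n
        rw [← Real.exp_nat_mul, mul_assoc, ← Real.exp_add]
        congr 1
        ring
      have hval : 2 * rexp (-t) * (1 / (1 - rexp (-(2 * t)))) = 1 / Real.sinh t := by
        have hb' : 0 < 1 - rexp (-(2 * t)) := by linarith
        have hsp : 0 < Real.sinh t := Real.sinh_pos_iff.mpr ht
        rw [mul_one_div, div_eq_div_iff hb'.ne' hsp.ne', Real.sinh_eq]
        have e1 : rexp (-t) * rexp t = 1 := by rw [← Real.exp_add]; simp
        have e2 : rexp (-t) * rexp (-t) = rexp (-(2 * t)) := by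
          rw [← Real.exp_add]; congr 1; ring
        linear_combination e1 - e2
      rw [show (1 : ℂ) / Complex.sinh (t : ℂ) = ((1 / Real.sinh t : ℝ) : ℂ) by
        push_cast [Complex.ofReal_sinh]; ring]
      have hC : HasSum (fun n : ℕ ↦ ((2 * rexp (-(2 * n + 1) * t) : ℝ) : ℂ))
          ((1 / Real.sinh t : ℝ) : ℂ) := by
        rw [Complex.hasSum_ofReal, ← hval]
        exact h2.congr_fun fun n ↦ (heq n).symm
      refine hC.congr_fun fun n ↦ ?_
      push_cast
      ring
    · have hsum : Summable (fun n : ℕ ↦ 1 / ((n : ℝ) + 1) ^ s.re) := by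
        have := (Real.summable_one_div_nat_rpow (p := s.re)).mpr hs
        exact_mod_cast (summable_nat_add_iff 1).mpr this
      refine Summable.of_nonneg_of_le (fun n ↦ by positivity)
        (fun n ↦ ?_) (hsum.mul_left 2)
      have h1 : ((n : ℝ) + 1) ^ s.re ≤ (2 * n + 1) ^ s.re :=
        Real.rpow_le_rpow (by positivity) (by nlinarith [Nat.cast_nonneg (α := ℝ) n]) (by linarith)
      have h2 : (0:ℝ) < ((n : ℝ) + 1) ^ s.re := by positivity
      rw [Complex.norm_ofNat]
      calc (2:ℝ) / (2 * (n:ℝ) + 1) ^ s.re ≤ 2 / ((n:ℝ) + 1) ^ s.re := by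
            gcongr
          _ = 2 * (1 / ((n:ℝ) + 1) ^ s.re) := by ring
  -- Step 2: identify the odd zeta sum
  have hf : HasSum (fun n : ℕ ↦ 1 / (n : ℂ) ^ s) (riemannZeta s) := by
    have hsummable : Summable (fun n : ℕ ↦ 1 / (n : ℂ) ^ s) :=
      Complex.summable_one_div_nat_cpow.mpr hs
    rw [zeta_eq_tsum_one_div_nat_cpow hs]
    exact hsummable.hasSum
  have heven : HasSum (fun n : ℕ ↦ 1 / ((2 * n : ℕ) : ℂ) ^ s)
      ((2:ℂ) ^ (-s) * riemannZeta s) := by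
    refine (hf.mul_left ((2:ℂ) ^ (-s))).congr_fun fun n ↦ ?_
    rcases Nat.eq_zero_or_pos n with rfl | hn
    · simp [Complex.zero_cpow hsne]
    · have : ((2 * n : ℕ) : ℂ) = ((2 : ℝ) : ℂ) * ((n : ℝ) : ℂ) := by push_cast; ring
      rw [this, Complex.mul_cpow_ofReal_nonneg (by norm_num) (Nat.cast_nonneg n),
        Complex.cpow_neg]
      field_simp
      simp
  have hodd_summable : Summable (fun n : ℕ ↦ 1 / ((2 * n + 1 : ℕ) : ℂ) ^ s) :=
    hf.summable.comp_injective fun a b hab ↦ by omega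
  have hodd := hodd_summable.hasSum
  have hsplit : HasSum (fun n : ℕ ↦ 1 / (n : ℂ) ^ s)
      ((2:ℂ) ^ (-s) * riemannZeta s + ∑' n : ℕ, 1 / ((2 * n + 1 : ℕ) : ℂ) ^ s) :=
    HasSum.even_add_odd (f := fun n : ℕ ↦ 1 / (n : ℂ) ^ s) heven hodd
  have hodd_val : (∑' n : ℕ, 1 / ((2 * n + 1 : ℕ) : ℂ) ^ s)
      = (1 - (2:ℂ) ^ (-s)) * riemannZeta s := by
    have := hf.unique hsplit
    linear_combination -this
  -- Step 3: conclude
  have hmel : mellin (fun t : ℝ ↦ 1 / Complex.sinh (t : ℂ)) s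
      = ∫ t in Set.Ioi (0 : ℝ), (t : ℂ) ^ (s - 1) / Complex.sinh (t : ℂ) := by
    rw [mellin]
    refine MeasureTheory.setIntegral_congr_fun measurableSet_Ioi fun t ht ↦ ?_
    simp [smul_eq_mul, div_eq_mul_inv]
  rw [← hmel, key.tsum_eq.symm]
  have : ∀ n : ℕ, Complex.Gamma s * 2 / ((2 * (n:ℝ) + 1 : ℝ) : ℂ) ^ s
      = (Complex.Gamma s * 2) * (1 / ((2 * n + 1 : ℕ) : ℂ) ^ s) := by
    intro n
    push_cast
    ring
  rw [tsum_congr this, tsum_mul_left, hodd_val]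
  ring
end

section
/- For any α ∈ (0, π/2), inf over t with |t| ≤ π/2 - α and λ ≥ 0 of |1 + λ·e^{2it}| is at least min(1, (4/π)·α). -/
open Real

theorem abs_one_add_lambda_exp (α : ℝ) (hα : 0 < α) (hα2 : α < π / 2)
    (t : ℝ) (ht : |t| ≤ π / 2 - α) (l : ℝ) (hl : 0 ≤ l) :
    min 1 ((4 / π) * α) ≤
      ‖1 + (l : ℂ) * Complex.exp (2 * (t : ℂ) * Complex.I)‖ := by
  have hπ := Real.pi_pos
  set θ := 2 * t with hθ
  have hz : (1 + (l : ℂ) * Complex.exp (2 * (t : ℂ) * Complex.I)) =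
      (↑(1 + l * Real.cos θ) + ↑(l * Real.sin θ) * Complex.I) := by
    have h2 : 2 * (t : ℂ) * Complex.I = (θ : ℂ) * Complex.I := by push_cast [hθ]; ring
    rw [h2, Complex.exp_mul_I, ← Complex.ofReal_cos, ← Complex.ofReal_sin]
    push_cast
    ring
  rw [hz, Complex.norm_add_mul_I]
  have hm0 : (0:ℝ) ≤ min 1 ((4 / π) * α) := by
    have : 0 ≤ (4 / π) * α := by positivity
    simp [le_min_iff, this]
  rw [Real.le_sqrt hm0]
  swap
  · positivity
  have hpyth := Real.sin_sq_add_cos_sq θ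
  by_cases hc : 0 ≤ Real.cos θ
  · have hm1 : min 1 ((4 / π) * α) ≤ 1 := min_le_left _ _
    nlinarith [mul_nonneg hl hc]
  · push_neg at hc
    -- |θ| ≤ π - 2α
    have hθabs : |θ| ≤ π - 2 * α := by
      rw [hθ, abs_mul, abs_two]
      linarith [ht]
    have habs0 : 0 ≤ |θ| := abs_nonneg θ
    -- cos |θ| = cos θ < 0, so |θ| > π/2
    have hcabs : Real.cos |θ| < 0 := by
      rcases abs_cases θ with ⟨h1, _⟩ | ⟨h1, _⟩ <;> rw [h1] <;> simp [Real.cos_neg, hc]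
    have hgt : π / 2 < |θ| := by
      by_contra h
      push_neg at h
      exact absurd (Real.cos_nonneg_of_mem_Icc ⟨by linarith, h⟩) (not_le.2 hcabs)
    -- sin |θ| = sin (π - |θ|) ≥ 2/π * (π - |θ|) ≥ 4α/π
    have hs : (4 / π) * α ≤ Real.sin |θ| := by
      rw [← Real.sin_pi_sub]
      have h1 : 0 ≤ π - |θ| := by linarith
      have h2 : π - |θ| ≤ π / 2 := by linarith
      have := Real.mul_le_sin h1 h2
      have h3 : (4 / π) * α ≤ 2 / π * (π - |θ|) := by
        rw [div_mul_eq_mul_div, div_mul_eq_mul_div, div_le_div_iff₀ hπ hπ]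
        nlinarith
      linarith
    have hsin2 : Real.sin θ ^ 2 = Real.sin |θ| ^ 2 := by
      rcases abs_cases θ with ⟨h1, _⟩ | ⟨h1, _⟩ <;> rw [h1] <;> simp [Real.sin_neg] <;> ring
    have hm2 : min 1 ((4 / π) * α) ≤ (4 / π) * α := min_le_right _ _
    have hapos : 0 < (4 / π) * α := by positivity
    have h4 : ((4 / π) * α) ^ 2 ≤ Real.sin |θ| ^ 2 := by nlinarith
    have h5 : (min 1 ((4 / π) * α)) ^ 2 ≤ ((4 / π) * α) ^ 2 := by nlinarith
    nlinarith [sq_nonneg (l + Real.cos θ), hsin2, h4, h5, hpyth]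
end

section
/- Let F : ℝ → ℝ be integrable on (0, 2] with ∫₀¹ |F(t)|·t^N dt < ∞. Then lim_{τ→0+} ∫₀¹ |F(t+τ) - F(t)|·t^N dt = 0. -/
open Filter MeasureTheory

theorem weighted_modulus_continuity (N : ℕ) (F : ℝ → ℝ)
    (hmeas : Measurable F)
    (hint : ∀ δ : ℝ, 0 < δ → IntegrableOn F (Set.Icc δ 2))
    (hw : IntegrableOn (fun t => |F t| * t ^ N) (Set.Ioc (0 : ℝ) 1)) :
    Tendsto (fun τ => ∫ t in Set.Ioc (0 : ℝ) 1, |F (t + τ) - F t| * t ^ N)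
      (nhdsWithin 0 (Set.Ioi 0)) (nhds 0) := by
  -- |F| * t^N is integrable on (0,2]
  have habs_meas : Measurable fun t : ℝ => |F t| * t ^ N :=
    hmeas.abs.mul (measurable_id.pow_const N)
  have h12 : IntegrableOn (fun t => |F t| * t ^ N) (Set.Ioc (1 : ℝ) 2) := by
    have h1 : IntegrableOn F (Set.Ioc (1 : ℝ) 2) :=
      (hint 1 one_pos).mono_set Set.Ioc_subset_Icc_self
    refine Integrable.mono' (h1.abs.mul_const ((2 : ℝ) ^ N))
      habs_meas.aestronglyMeasurable ?_
    refine (ae_restrict_iff' measurableSet_Ioc).2 (ae_of_all _ fun t ht => ?_)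
    have h0t : (0 : ℝ) ≤ t := by linarith [ht.1]
    have htN : t ^ N ≤ 2 ^ N := pow_le_pow_left₀ h0t ht.2 N
    have : ‖|F t| * t ^ N‖ = |F t| * t ^ N := by
      rw [Real.norm_eq_abs, abs_of_nonneg (mul_nonneg (abs_nonneg _) (pow_nonneg h0t N))]
    rw [this]
    exact mul_le_mul_of_nonneg_left htN (abs_nonneg _)
  have hFw : IntegrableOn (fun t => |F t| * t ^ N) (Set.Ioc (0 : ℝ) 2) := by
    have : Set.Ioc (0 : ℝ) 2 = Set.Ioc 0 1 ∪ Set.Ioc 1 2 :=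
      (Set.Ioc_union_Ioc_eq_Ioc (by norm_num) (by norm_num)).symm
    rw [this]
    exact hw.union h12
  -- the globalized function G
  set G : ℝ → ℝ := (Set.Ioc (0 : ℝ) 2).indicator (fun t => F t * t ^ N) with hGdef
  have hGm : Measurable G :=
    (hmeas.mul (measurable_id.pow_const N)).indicator measurableSet_Ioc
  have hGint : Integrable G := by
    rw [hGdef, integrable_indicator_iff measurableSet_Ioc]
    refine Integrable.mono' hFw
      ((hmeas.mul (measurable_id.pow_const N)).aestronglyMeasurable) ?_
    refine (ae_restrict_iff' measurableSet_Ioc).2 (ae_of_all _ fun t ht => ?_)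
    rw [Real.norm_eq_abs, abs_mul, abs_of_nonneg (pow_nonneg ht.1.le N)]
  -- G as an L¹ element
  set Glp : Lp ℝ 1 (volume : Measure ℝ) := hGint.toL1 G with hGlpdef
  -- translations as continuous maps
  set T : ℝ → C(ℝ, ℝ) := fun τ => ⟨fun x => x + τ, continuous_id.add continuous_const⟩
    with hTdef
  have hTcont : Continuous T := by
    apply ContinuousMap.continuous_of_continuous_uncurry
    exact continuous_snd.add continuous_fst
  have hmp : ∀ τ : ℝ, MeasurePreserving (T τ) volume volume := fun τ =>
    measurePreserving_add_right volume τ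
  -- continuity of translation in L¹
  have key : Tendsto (fun τ => Lp.compMeasurePreserving (T τ) (hmp τ) Glp)
      (nhdsWithin 0 (Set.Ioi 0)) (nhds (Lp.compMeasurePreserving (T 0) (hmp 0) Glp)) :=
    Filter.Tendsto.compMeasurePreservingLp tendsto_const_nhds
      ((hTcont.tendsto 0).mono_left nhdsWithin_le_nhds) hmp (hmp 0) ENNReal.one_ne_top
  have heq : Lp.compMeasurePreserving (T 0) (hmp 0) Glp = Glp := by
    apply Lp.ext
    refine (Lp.coeFn_compMeasurePreserving Glp (hmp 0)).trans ?_
    have : (⇑Glp) ∘ (T 0) = ⇑Glp := by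
      funext x
      simp [hTdef]
    rw [this]
  rw [heq] at key
  have hnorm : Tendsto (fun τ => ‖Lp.compMeasurePreserving (T τ) (hmp τ) Glp - Glp‖)
      (nhdsWithin 0 (Set.Ioi 0)) (nhds 0) :=
    tendsto_iff_norm_sub_tendsto_zero.mp key
  -- integrability of shifts of G
  have hGshift : ∀ τ : ℝ, Integrable (fun t => G (t + τ)) := fun τ =>
    ((measurePreserving_add_right volume τ).integrable_comp
      hGm.aestronglyMeasurable).2 hGint
  -- the norm of the difference as an integral
  have hnorm_eq : ∀ τ : ℝ, ‖Lp.compMeasurePreserving (T τ) (hmp τ) Glp - Glp‖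
      = ∫ t, |G (t + τ) - G t| := by
    intro τ
    rw [L1.norm_eq_integral_norm]
    apply integral_congr_ae
    have e1 : ⇑(Lp.compMeasurePreserving (T τ) (hmp τ) Glp) =ᵐ[volume] G ∘ (T τ) :=
      (Lp.coeFn_compMeasurePreserving Glp (hmp τ)).trans
        ((hmp τ).quasiMeasurePreserving.ae_eq_comp (hGint.coeFn_toL1))
    have e2 : ⇑Glp =ᵐ[volume] G := hGint.coeFn_toL1
    filter_upwards [Lp.coeFn_sub (Lp.compMeasurePreserving (T τ) (hmp τ) Glp) Glp, e1, e2]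
      with a ha hb hc
    rw [ha]
    simp only [Pi.sub_apply, hb, hc, Function.comp_apply, Real.norm_eq_abs, hTdef]
    exact congrArg (fun x => |x - G a|) hb
  -- the auxiliary dominating family
  set D : ℝ → ℝ → ℝ := fun τ => (Set.Ioc (0 : ℝ) 2).indicator
    (fun s => |F s| * (s ^ N - max (s - τ) 0 ^ N)) with hDdef
  have hDmeas : ∀ τ : ℝ, Measurable (D τ) := fun τ =>
    (hmeas.abs.mul ((measurable_id.pow_const N).sub
      (((measurable_id.sub_const τ).max measurable_const).pow_const N))).indicator
      measurableSet_Ioc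
  have hDnonneg : ∀ τ : ℝ, 0 ≤ τ → ∀ s : ℝ, 0 ≤ D τ s := by
    intro τ hτ s
    rw [hDdef]
    apply Set.indicator_nonneg
    intro s hs
    refine mul_nonneg (abs_nonneg _) (sub_nonneg.2 ?_)
    exact pow_le_pow_left₀ (le_max_right _ _) (max_le (by linarith [hs.1]) hs.1.le) N
  set bound : ℝ → ℝ := (Set.Ioc (0 : ℝ) 2).indicator (fun s => |F s| * s ^ N) with hbdef
  have hboundInt : Integrable bound := by
    rw [hbdef, integrable_indicator_iff measurableSet_Ioc]
    exact hFw
  have hDle : ∀ τ : ℝ, 0 ≤ τ → ∀ s : ℝ, ‖D τ s‖ ≤ bound s := by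
    intro τ hτ s
    by_cases hs : s ∈ Set.Ioc (0 : ℝ) 2
    · rw [hDdef, hbdef]
      simp only [Set.indicator_of_mem hs]
      rw [Real.norm_eq_abs, abs_of_nonneg]
      · refine mul_le_mul_of_nonneg_left ?_ (abs_nonneg _)
        exact sub_le_self _ (pow_nonneg (le_max_right _ _) N)
      · refine mul_nonneg (abs_nonneg _) (sub_nonneg.2 ?_)
        exact pow_le_pow_left₀ (le_max_right _ _) (max_le (by linarith [hs.1]) hs.1.le) N
    · rw [hDdef, hbdef]
      simp [Set.indicator_of_notMem hs]
  have hDint : ∀ τ : ℝ, 0 ≤ τ → Integrable (D τ) := fun τ hτ =>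
    hboundInt.mono' (hDmeas τ).aestronglyMeasurable (ae_of_all _ (hDle τ hτ))
  -- dominated convergence for the second term
  have hBtendsto : Tendsto (fun τ => ∫ s, D τ s) (nhdsWithin 0 (Set.Ioi 0)) (nhds 0) := by
    have h := tendsto_integral_filter_of_dominated_convergence
      (μ := (volume : Measure ℝ)) (l := nhdsWithin (0:ℝ) (Set.Ioi 0)) (F := D) (f := fun _ => (0 : ℝ)) bound ?_ ?_ hboundInt ?_
    · simpa using h
    · exact Eventually.of_forall fun τ => (hDmeas τ).aestronglyMeasurable
    · filter_upwards [self_mem_nhdsWithin] with τ hτ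
      exact ae_of_all _ (hDle τ (le_of_lt hτ))
    · refine ae_of_all _ fun s => ?_
      by_cases hs : s ∈ Set.Ioc (0 : ℝ) 2
      · have hc : Continuous fun τ : ℝ => |F s| * (s ^ N - max (s - τ) 0 ^ N) := by
          apply continuous_const.mul
          exact continuous_const.sub (((continuous_const.sub continuous_id).max
            continuous_const).pow N)
        have h0' : |F s| * (s ^ N - max (s - 0) 0 ^ N) = 0 := by
          rw [sub_zero, max_eq_left hs.1.le]
          ring
        have := (hc.tendsto 0).mono_left (nhdsWithin_le_nhds (s := Set.Ioi (0:ℝ)))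
        rw [h0'] at this
        refine this.congr fun τ => ?_
        rw [hDdef]
        simp [Set.indicator_of_mem hs]
      · have : ∀ τ : ℝ, D τ s = 0 := fun τ => by
          rw [hDdef]; simp [Set.indicator_of_notMem hs]
        simp only [this]
        exact tendsto_const_nhds
  -- shifts of D
  have hDshift : ∀ τ : ℝ, 0 ≤ τ → Integrable (fun t => D τ (t + τ)) := fun τ hτ =>
    ((measurePreserving_add_right volume τ).integrable_comp
      (hDmeas τ).aestronglyMeasurable).2 (hDint τ hτ)
  have hDshift_int_eq : ∀ τ : ℝ, (∫ t, D τ (t + τ)) = ∫ s, D τ s := fun τ =>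
    MeasurePreserving.integral_comp (measurePreserving_add_right volume τ)
      (MeasurableEquiv.addRight τ).measurableEmbedding (D τ)
  -- main squeeze
  have hInonneg : ∀ τ : ℝ, 0 ≤ ∫ t in Set.Ioc (0 : ℝ) 1, |F (t + τ) - F t| * t ^ N := by
    intro τ
    refine setIntegral_nonneg measurableSet_Ioc fun t ht => ?_
    exact mul_nonneg (abs_nonneg _) (pow_nonneg ht.1.le N)
  have hmain : ∀ τ ∈ Set.Ioo (0 : ℝ) 1,
      (∫ t in Set.Ioc (0 : ℝ) 1, |F (t + τ) - F t| * t ^ N)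
        ≤ ‖Lp.compMeasurePreserving (T τ) (hmp τ) Glp - Glp‖ + ∫ s, D τ s := by
    intro τ hτ
    have hptwise : ∀ t ∈ Set.Ioc (0 : ℝ) 1,
        |F (t + τ) - F t| * t ^ N ≤ |G (t + τ) - G t| + D τ (t + τ) := by
      intro t ht
      have ht2 : t ∈ Set.Ioc (0 : ℝ) 2 := ⟨ht.1, by linarith [ht.2]⟩
      have htτ2 : t + τ ∈ Set.Ioc (0 : ℝ) 2 :=
        ⟨by linarith [ht.1, hτ.1], by linarith [ht.2, hτ.2]⟩
      have hG1 : G t = F t * t ^ N := by rw [hGdef]; simp [Set.indicator_of_mem ht2]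
      have hG2 : G (t + τ) = F (t + τ) * (t + τ) ^ N := by
        rw [hGdef]; simp [Set.indicator_of_mem htτ2]
      have hD2 : D τ (t + τ) = |F (t + τ)| * ((t + τ) ^ N - t ^ N) := by
        rw [hDdef]
        simp only [Set.indicator_of_mem htτ2]
        rw [add_sub_cancel_right, max_eq_left ht.1.le]
      have hstep1 : |F (t + τ) - F t| * t ^ N = |F (t + τ) * t ^ N - F t * t ^ N| := by
        rw [← sub_mul, abs_mul, abs_of_nonneg (pow_nonneg ht.1.le N)]
      have hstep2 : |F (t + τ) * t ^ N - F t * t ^ N|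
          ≤ |F (t + τ) * t ^ N - F (t + τ) * (t + τ) ^ N|
            + |F (t + τ) * (t + τ) ^ N - F t * t ^ N| :=
        abs_sub_le _ _ _
      have hstep3 : |F (t + τ) * t ^ N - F (t + τ) * (t + τ) ^ N|
          = |F (t + τ)| * ((t + τ) ^ N - t ^ N) := by
        rw [← mul_sub, abs_mul]
        congr 1
        rw [abs_sub_comm, abs_of_nonneg (sub_nonneg.2
          (pow_le_pow_left₀ ht.1.le (by linarith [hτ.1]) N))]
      calc |F (t + τ) - F t| * t ^ N
          = |F (t + τ) * t ^ N - F t * t ^ N| := hstep1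
        _ ≤ |F (t + τ) * t ^ N - F (t + τ) * (t + τ) ^ N|
            + |F (t + τ) * (t + τ) ^ N - F t * t ^ N| := hstep2
        _ = |F (t + τ)| * ((t + τ) ^ N - t ^ N) + |G (t + τ) - G t| := by
            rw [hstep3, hG1, hG2]
        _ = |G (t + τ) - G t| + D τ (t + τ) := by rw [hD2]; ring
    have hRHSint : IntegrableOn (fun t => |G (t + τ) - G t| + D τ (t + τ))
        (Set.Ioc (0 : ℝ) 1) :=
      (((hGshift τ).sub hGint).abs.add (hDshift τ hτ.1.le)).integrableOn
    have hLHSnonneg : 0 ≤ᵐ[volume.restrict (Set.Ioc (0 : ℝ) 1)]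
        fun t => |F (t + τ) - F t| * t ^ N := by
      refine (ae_restrict_iff' measurableSet_Ioc).2 (ae_of_all _ fun t ht => ?_)
      exact mul_nonneg (abs_nonneg _) (pow_nonneg ht.1.le N)
    have hbnd : (fun t => |F (t + τ) - F t| * t ^ N)
        ≤ᵐ[volume.restrict (Set.Ioc (0 : ℝ) 1)]
        fun t => |G (t + τ) - G t| + D τ (t + τ) :=
      (ae_restrict_iff' measurableSet_Ioc).2 (ae_of_all _ hptwise)
    calc (∫ t in Set.Ioc (0 : ℝ) 1, |F (t + τ) - F t| * t ^ N)
        ≤ ∫ t in Set.Ioc (0 : ℝ) 1, (|G (t + τ) - G t| + D τ (t + τ)) :=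
          integral_mono_of_nonneg hLHSnonneg hRHSint hbnd
      _ = (∫ t in Set.Ioc (0 : ℝ) 1, |G (t + τ) - G t|)
            + ∫ t in Set.Ioc (0 : ℝ) 1, D τ (t + τ) :=
          integral_add (((hGshift τ).sub hGint).abs.integrableOn)
            ((hDshift τ hτ.1.le).integrableOn)
      _ ≤ ‖Lp.compMeasurePreserving (T τ) (hmp τ) Glp - Glp‖ + ∫ s, D τ s := by
          gcongr
          · rw [hnorm_eq τ]
            refine setIntegral_le_integral ((hGshift τ).sub hGint).abs
              (ae_of_all _ fun t => abs_nonneg _)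
          · rw [← hDshift_int_eq τ]
            exact setIntegral_le_integral (hDshift τ hτ.1.le)
              (ae_of_all _ fun t => hDnonneg τ hτ.1.le _)
  -- conclude
  have hg0 : Tendsto (fun τ => ‖Lp.compMeasurePreserving (T τ) (hmp τ) Glp - Glp‖
      + ∫ s, D τ s) (nhdsWithin 0 (Set.Ioi 0)) (nhds 0) := by
    have := hnorm.add hBtendsto
    simpa using this
  refine squeeze_zero' ?_ ?_ hg0
  · exact Eventually.of_forall hInonneg
  · filter_upwards [Ioo_mem_nhdsGT_of_mem (by simp : (0:ℝ) ∈ Set.Ico (0:ℝ) 1)] with τ hτ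
    exact hmain τ hτ
end

section
/- The theta-like function Θ₁(t) = 1 + 2·∑_{k=1}^∞ (-1)^k·exp(-(πk)²/t) satisfies the identity Θ₁(t) = 2·√(t/π)·e^{-t/4}·(1 + ∑_{k=1}^∞ e^{-k(k+1)t}) for all t > 0; in particular Θ₁(t) = 2·√(t/π)·e^{-t/4}·(1 + O(e^{-2t})) as t → ∞. -/
open Real Filter Asymptotics

section aux

private lemma summable_geom_bound {r : ℝ} (hr0 : 0 ≤ r) (hr1 : r < 1) {f : ℕ → ℝ}
    (h : ∀ n, |f n| ≤ r ^ n) : Summable f :=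
  Summable.of_norm_bounded (summable_geometric_of_lt_one hr0 hr1) h

private lemma sumA {t : ℝ} (ht : 0 < t) :
    Summable (fun n : ℕ => Real.exp (-(π * (n : ℝ)) ^ 2 / t)) := by
  have hr1 : Real.exp (-π ^ 2 / t) < 1 := by
    rw [Real.exp_lt_one_iff, neg_div, neg_lt_zero]
    positivity
  refine summable_geom_bound (Real.exp_nonneg _) hr1 (fun n => ?_)
  rw [_root_.abs_of_nonneg (Real.exp_nonneg _), ← Real.exp_nat_mul, Real.exp_le_exp]
  have h1 : (n : ℝ) ≤ (n : ℝ) ^ 2 := by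
    rcases Nat.eq_zero_or_pos n with h | h
    · simp [h]
    · have : (1 : ℝ) ≤ (n : ℝ) := by exact_mod_cast h
      nlinarith
  have hπ : (0 : ℝ) < π ^ 2 / t := by positivity
  calc -(π * (n : ℝ)) ^ 2 / t = -(π ^ 2 / t) * (n : ℝ) ^ 2 := by ring
    _ ≤ -(π ^ 2 / t) * (n : ℝ) := by nlinarith
    _ = (n : ℝ) * (-π ^ 2 / t) := by ring

private lemma sumB {t : ℝ} (ht : 0 < t) :
    Summable (fun n : ℕ => Real.exp (-((n : ℝ) * ((n : ℝ) - 1)) * t)) := by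
  have hr1 : Real.exp (-t) < 1 := by rw [Real.exp_lt_one_iff]; linarith
  have h : Summable (fun n : ℕ => Real.exp t * Real.exp (-t) ^ n) :=
    (summable_geometric_of_lt_one (Real.exp_nonneg _) hr1).mul_left _
  refine h.of_nonneg_of_le (fun n => Real.exp_nonneg _) (fun n => ?_)
  rw [← Real.exp_nat_mul, ← Real.exp_add, Real.exp_le_exp]
  nlinarith [sq_nonneg ((n : ℝ) - 1)]

private lemma sumC {t : ℝ} (ht : 0 < t) :
    Summable (fun k : ℕ => Real.exp (-((k + 1) * (k + 2)) * t)) := by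
  have hr1 : Real.exp (-t) < 1 := by rw [Real.exp_lt_one_iff]; linarith
  refine summable_geom_bound (Real.exp_nonneg _) hr1 (fun n => ?_)
  rw [_root_.abs_of_nonneg (Real.exp_nonneg _), ← Real.exp_nat_mul, Real.exp_le_exp]
  nlinarith [(Nat.cast_nonneg n : (0:ℝ) ≤ n), sq_nonneg ((n : ℝ))]

private lemma lemA {t : ℝ} (ht : 0 < t) :
    ∑' n : ℤ, ((-1 : ℝ) ^ n * Real.exp (-(π * (n : ℝ)) ^ 2 / t)) = Theta1 t := by
  set f : ℤ → ℝ := fun n => (-1 : ℝ) ^ n * Real.exp (-(π * (n : ℝ)) ^ 2 / t) with hf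
  have hnat : ∀ n : ℕ, f n = (-1 : ℝ) ^ n * Real.exp (-(π * (n : ℝ)) ^ 2 / t) := by
    intro n; simp [hf, zpow_natCast]
  have hneg : ∀ n : ℕ, f (-(n + 1)) =
      (-1 : ℝ) ^ (n + 1) * Real.exp (-(π * ((n : ℝ) + 1)) ^ 2 / t) := by
    intro n
    simp only [hf]
    rw [show ((-(↑n + 1)) : ℤ) = -((n + 1 : ℕ) : ℤ) by push_cast; ring, zpow_neg, zpow_natCast,
      ← inv_pow, inv_neg, inv_one]
    congr 2
    push_cast
    ring_nf
  have hs1 : Summable (fun n : ℕ => f n) := by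
    refine Summable.of_norm_bounded (sumA ht) (fun n => ?_)
    rw [hnat, Real.norm_eq_abs, abs_mul, abs_pow, abs_neg, abs_one, one_pow, one_mul,
      _root_.abs_of_nonneg (Real.exp_nonneg _)]
  have hs2 : Summable (fun n : ℕ => f (-(n + 1))) := by
    refine Summable.of_norm_bounded ((summable_nat_add_iff 1).mpr (sumA ht)) (fun n => ?_)
    rw [hneg, Real.norm_eq_abs, abs_mul, abs_pow, abs_neg, abs_one, one_pow, one_mul,
      _root_.abs_of_nonneg (Real.exp_nonneg _)]
    exact le_of_eq (by push_cast; ring_nf)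
  rw [tsum_of_nat_of_neg_add_one hs1 hs2, tsum_congr hneg, tsum_congr hnat,
    Summable.tsum_eq_zero_add (hs1.congr fun n => (hnat n).symm ▸ rfl)]
  unfold Theta1
  push_cast
  norm_num
  ring

private lemma lemB {t : ℝ} (ht : 0 < t) :
    ∑' n : ℤ, Real.exp (-((n : ℝ) * ((n : ℝ) - 1)) * t) =
      2 * (1 + ∑' k : ℕ, Real.exp (-((k + 1) * (k + 2)) * t)) := by
  set g : ℤ → ℝ := fun n => Real.exp (-((n : ℝ) * ((n : ℝ) - 1)) * t) with hg
  have hnat : ∀ n : ℕ, g n = Real.exp (-((n : ℝ) * ((n : ℝ) - 1)) * t) := fun n => by simp [hg]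
  have hneg : ∀ n : ℕ, g (-(n + 1)) = Real.exp (-(((n : ℝ) + 1) * ((n : ℝ) + 2)) * t) := by
    intro n; simp only [hg]; congr 1; push_cast; ring
  have hs1 : Summable (fun n : ℕ => g n) := (sumB ht).congr fun n => (hnat n).symm
  have hs2 : Summable (fun n : ℕ => g (-(n + 1))) := (sumC ht).congr fun n => (hneg n).symm
  have hshift : Summable (fun n : ℕ => Real.exp (-((((n : ℕ) + 1 : ℕ) : ℝ) * ((((n : ℕ) + 1 : ℕ) : ℝ) - 1)) * t)) := by
    exact_mod_cast (summable_nat_add_iff 1).mpr (sumB ht)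
  rw [tsum_of_nat_of_neg_add_one hs1 hs2, tsum_congr hneg, tsum_congr hnat,
    Summable.tsum_eq_zero_add (hs1.congr fun n => (hnat n).symm ▸ rfl),
    Summable.tsum_eq_zero_add hshift]
  have hcongr : ∀ b : ℕ, Real.exp (-(((b + 1 + 1 : ℕ) : ℝ) * (((b + 1 + 1 : ℕ) : ℝ) - 1)) * t)
      = Real.exp (-(((b : ℝ) + 1) * ((b : ℝ) + 2)) * t) := by
    intro b; congr 1; push_cast; ring
  rw [tsum_congr hcongr]
  push_cast
  norm_num
  ring

open Complex in
private lemma trans_eq {t : ℝ} (ht : 0 < t) :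
    Theta1 t = 2 * Real.sqrt (t / π) * Real.exp (-t / 4) *
      (1 + ∑' k : ℕ, Real.exp (-((k + 1) * (k + 2)) * t)) := by
  have hπ := Real.pi_pos
  have ha : (0:ℝ) < π / t := by positivity
  have hπ0 : (π : ℂ) ≠ 0 := by exact_mod_cast hπ.ne'
  have ht0 : (t : ℂ) ≠ 0 := by exact_mod_cast ht.ne'
  have key := Complex.tsum_exp_neg_quadratic (a := ((π / t : ℝ) : ℂ)) (by simpa using ha) (I / 2)
  have hL : ∀ n : ℤ,
      Complex.exp (-(π:ℂ) * ((π / t : ℝ) : ℂ) * (n:ℂ) ^ 2 + 2 * (π:ℂ) * (I / 2) * (n:ℂ))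
      = (((-1 : ℝ) ^ n * Real.exp (-(π * (n : ℝ)) ^ 2 / t) : ℝ) : ℂ) := by
    intro n
    have e : (-(π:ℂ) * ((π / t : ℝ) : ℂ) * (n:ℂ) ^ 2 + 2 * (π:ℂ) * (I / 2) * (n:ℂ))
        = ((-(π * (n : ℝ)) ^ 2 / t : ℝ) : ℂ) + (n : ℂ) * ((π : ℂ) * I) := by
      push_cast
      field_simp
    rw [e, Complex.exp_add, Complex.exp_int_mul, Complex.exp_pi_mul_I]
    push_cast
    ring
  have hR : ∀ n : ℤ, Complex.exp (-(π:ℂ) / ((π / t : ℝ) : ℂ) * ((n:ℂ) + I * (I / 2)) ^ 2)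
      = ((Real.exp (-t / 4) * Real.exp (-((n : ℝ) * ((n : ℝ) - 1)) * t) : ℝ) : ℂ) := by
    intro n
    have hI : I * (I / 2) = -(1 / 2 : ℂ) := by
      rw [show I * (I / 2) = I * I / 2 from (mul_div_assoc _ _ _).symm, Complex.I_mul_I]
      norm_num
    have e : (-(π:ℂ) / ((π / t : ℝ) : ℂ) * ((n:ℂ) + I * (I / 2)) ^ 2)
        = ((-t / 4 + -((n : ℝ) * ((n : ℝ) - 1)) * t : ℝ) : ℂ) := by
      rw [hI]
      push_cast
      field_simp
      ring
    rw [e, ← Complex.ofReal_exp, Real.exp_add]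
  have hpre : 1 / (((π / t : ℝ) : ℂ) ^ (1 / 2 : ℂ)) = ((Real.sqrt (t / π) : ℝ) : ℂ) := by
    rw [show (1/2 : ℂ) = ((1/2 : ℝ) : ℂ) by norm_num, ← Complex.ofReal_cpow ha.le,
      ← Real.sqrt_eq_rpow, ← Complex.ofReal_one, ← Complex.ofReal_div]
    congr 1
    rw [one_div, ← Real.sqrt_inv, inv_div]
  simp only [hL, hR] at key
  rw [← Complex.ofReal_tsum, ← Complex.ofReal_tsum, hpre, ← Complex.ofReal_mul] at key
  have keyR := Complex.ofReal_inj.mp key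
  rw [lemA ht, tsum_mul_left, lemB ht] at keyR
  rw [keyR]
  ring

end aux

theorem theta1_transformation :
    (∀ t : ℝ, 0 < t →
        Theta1 t = 2 * Real.sqrt (t / π) * Real.exp (-t / 4) *
          (1 + ∑' k : ℕ, Real.exp (-((k + 1) * (k + 2)) * t))) ∧
      (fun t : ℝ => Theta1 t / (2 * Real.sqrt (t / π) * Real.exp (-t / 4)) - 1) =O[atTop]
        fun t : ℝ => Real.exp (-2 * t) := by
  constructor
  · intro t ht
    exact trans_eq ht
  · rw [isBigO_iff]
    refine ⟨2, ?_⟩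
    filter_upwards [eventually_ge_atTop (1 : ℝ)] with t ht1
    have ht : 0 < t := lt_of_lt_of_le one_pos ht1
    have hπ := Real.pi_pos
    have hD : (0:ℝ) < 2 * Real.sqrt (t / π) * Real.exp (-t / 4) := by
      have h1 : 0 < t / π := by positivity
      have h2 : 0 < Real.sqrt (t / π) := Real.sqrt_pos.mpr h1
      positivity
    have hfeq : Theta1 t / (2 * Real.sqrt (t / π) * Real.exp (-t / 4)) - 1
        = ∑' k : ℕ, Real.exp (-((k + 1) * (k + 2)) * t) := by
      rw [trans_eq ht, mul_comm, mul_div_assoc, div_self hD.ne', mul_one]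
      ring
    rw [hfeq]
    have hr0 : (0:ℝ) ≤ Real.exp (-2 * t) := Real.exp_nonneg _
    have hr1 : Real.exp (-2 * t) < 1 := by rw [Real.exp_lt_one_iff]; linarith
    have hrhalf : Real.exp (-2 * t) ≤ 1 / 2 := by
      have h1 : Real.exp (-2 * t) ≤ Real.exp (-2) := by rw [Real.exp_le_exp]; linarith
      have h2 : (2:ℝ) ≤ Real.exp 2 := by nlinarith [Real.add_one_le_exp (2:ℝ)]
      have h3 : Real.exp (-2) ≤ 1 / 2 := by
        rw [Real.exp_neg, one_div]
        exact inv_anti₀ two_pos h2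
      linarith
    have hterm : ∀ k : ℕ, Real.exp (-((k + 1) * (k + 2)) * t) ≤ Real.exp (-2 * t) ^ (k + 1) := by
      intro k
      rw [← Real.exp_nat_mul, Real.exp_le_exp]
      push_cast
      nlinarith [mul_nonneg (mul_nonneg (Nat.cast_nonneg k : (0:ℝ) ≤ k)
        (by positivity : (0:ℝ) ≤ (k:ℝ) + 1)) ht.le]
    have hgeom : Summable (fun k : ℕ => Real.exp (-2 * t) ^ (k + 1)) :=
      (summable_nat_add_iff 1).mpr (summable_geometric_of_lt_one hr0 hr1)
    have hSle : (∑' k : ℕ, Real.exp (-((k + 1) * (k + 2)) * t)) ≤ 2 * Real.exp (-2 * t) := by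
      calc (∑' k : ℕ, Real.exp (-((k + 1) * (k + 2)) * t))
          ≤ ∑' k : ℕ, Real.exp (-2 * t) ^ (k + 1) := Summable.tsum_le_tsum hterm (sumC ht) hgeom
        _ = (∑' k : ℕ, Real.exp (-2 * t) ^ k) * Real.exp (-2 * t) := by
            simp_rw [pow_succ]
            rw [tsum_mul_right]
        _ = (1 - Real.exp (-2 * t))⁻¹ * Real.exp (-2 * t) := by
            rw [tsum_geometric_of_lt_one hr0 hr1]
        _ ≤ 2 * Real.exp (-2 * t) := by
            have hpos : (0:ℝ) < 1 - Real.exp (-2 * t) := by linarith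
            have hinv : (1 - Real.exp (-2 * t))⁻¹ ≤ 2 := by
              rw [← one_div, div_le_iff₀ hpos]
              linarith
            nlinarith
    have hS0 : (0:ℝ) ≤ ∑' k : ℕ, Real.exp (-((k + 1) * (k + 2)) * t) :=
      tsum_nonneg fun k => Real.exp_nonneg _
    rw [Real.norm_eq_abs, Real.norm_eq_abs, _root_.abs_of_nonneg hS0, _root_.abs_of_nonneg hr0]
    exact hSle
end
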